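/- For every n ∈ ℕ, G_A acts transitively on the set Xⁿ of words of length n over X: for all words u, v over X with |u| = |v| = n, there exists g ∈ G_A with g(u) = v. -/

import Mathlib

/-!
We formalize the automaton `A` of the paper: alphabet `X = {1,2,3}` is encoded as
`Fin 3` (letter `i+1` ↦ `i`), states `a, b, c` are encoded as `0, 1, 2 : Fin 3`.
Each state induces a permutation of the space `ℕ → Fin 3` of infinite sequences.

Note on conventions: in the paper, products of tree automorphisms compose
left-to-right (in a word `s₁s₂⋯sₙ`, the letter `s₁` acts first); in Mathlib,
`(f * g) w = f (g w)`, i.e. the right factor acts first.  Hence a paper word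
`uv` is rendered as the Lean product `v * u`; e.g. the paper's `α = ab⁻¹`
(apply `a`, then `b⁻¹`) is `b⁻¹ * a` below.
-/

namespace Lamplighter

section Generic

variable {S X : Type*}

/-- The state of the automaton after reading the first `n` letters of `w`, starting at `s`. -/
def run (nxt : S → X → S) (s : S) (w : ℕ → X) : ℕ → S
  | 0 => s
  | n + 1 => nxt (run nxt s w n) (w n)

/-- The output sequence of the automaton started in state `s` reading `w`. -/
def fwd (nxt : S → X → S) (out : S → Equiv.Perm X) (s : S) (w : ℕ → X) : ℕ → X :=
  fun n => out (run nxt s w n) (w n)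

/-- Transition function of the inverse automaton. -/
def invNxt (nxt : S → X → S) (out : S → Equiv.Perm X) (s : S) (y : X) : S :=
  nxt s ((out s).symm y)

/-- The action of the inverse automaton, started at state `s`. -/
def bwd (nxt : S → X → S) (out : S → Equiv.Perm X) (s : S) (y : ℕ → X) : ℕ → X :=
  fun n => (out (run (invNxt nxt out) s y n)).symm (y n)

theorem run_inv_fwd (nxt : S → X → S) (out : S → Equiv.Perm X) (s : S) (w : ℕ → X) :
    ∀ n, run (invNxt nxt out) s (fwd nxt out s w) n = run nxt s w n := by
  intro n
  induction n with
  | zero => rfl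
  | succ n ih => simp [run, ih, invNxt, fwd]

theorem run_bwd (nxt : S → X → S) (out : S → Equiv.Perm X) (s : S) (y : ℕ → X) :
    ∀ n, run nxt s (bwd nxt out s y) n = run (invNxt nxt out) s y n := by
  intro n
  induction n with
  | zero => rfl
  | succ n ih => simp [run, ih, bwd, invNxt]

/-- The permutation of the space of infinite sequences induced by state `s`
of an invertible automaton. -/
def statePerm (nxt : S → X → S) (out : S → Equiv.Perm X) (s : S) : Equiv.Perm (ℕ → X) where
  toFun := fwd nxt out s
  invFun := bwd nxt out s
  left_inv := fun w => funext fun n => by simp [bwd, run_inv_fwd, fwd]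
  right_inv := fun y => funext fun n => by simp [fwd, run_bwd, bwd]

end Generic

/-- The alphabet `X = {1,2,3}`, encoded as `Fin 3`. -/
abbrev X3 := Fin 3

/-- Transition function of the automaton `A` (states `a = 0`, `b = 1`, `c = 2`):
from `a`: `1 ↦ a, 2 ↦ b, 3 ↦ c`; from `b`: `1 ↦ c, 2 ↦ a, 3 ↦ b`;
from `c`: `1 ↦ b, 2 ↦ c, 3 ↦ a`. -/
def nxtA : Fin 3 → X3 → Fin 3 := ![![0, 1, 2], ![2, 0, 1], ![1, 2, 0]]

/-- Output permutations of the automaton `A`: state `a` acts on letters as the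
transposition `(2 3)`, state `b` as `(1 3)`, state `c` as `(1 2)`. -/
def outA : Fin 3 → Equiv.Perm X3 := ![Equiv.swap 1 2, Equiv.swap 0 2, Equiv.swap 0 1]

/-- The permutation of `X^ℕ` given by state `a`. -/
def a : Equiv.Perm (ℕ → X3) := statePerm nxtA outA 0

/-- The permutation of `X^ℕ` given by state `b`. -/
def b : Equiv.Perm (ℕ → X3) := statePerm nxtA outA 1

/-- The permutation of `X^ℕ` given by state `c`. -/
def c : Equiv.Perm (ℕ → X3) := statePerm nxtA outA 2

/-- The group `G_A` generated by the automaton `A`. -/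
def GA : Subgroup (Equiv.Perm (ℕ → X3)) := Subgroup.closure {a, b, c}

/-- The element `α = ab⁻¹` of the paper (first apply `a`, then `b⁻¹`). -/
def α : Equiv.Perm (ℕ → X3) := b⁻¹ * a

/-- The set `W` of permutations acting coordinatewise by a sequence of even
permutations of the alphabet. -/
def W : Set (Equiv.Perm (ℕ → X3)) :=
  {g | ∃ π : ℕ → Equiv.Perm X3, (∀ n, Equiv.Perm.sign (π n) = 1) ∧
    ∀ (w : ℕ → X3) (n : ℕ), g w n = π n (w n)}

/-- The subgroup `N` generated by the conjugates `a⁻ⁿ α aⁿ`, `n ∈ ℤ`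
(in Lean's composition order: `aⁿ * α * a⁻ⁿ`). -/
def N : Subgroup (Equiv.Perm (ℕ → X3)) :=
  Subgroup.closure {g | ∃ n : ℤ, g = a ^ n * α * a ^ (-n)}


/-! ### Auxiliary development for the proof of Statement 7 -/

open Fin.CommRing

lemma nxtA_eq (s x : Fin 3) : nxtA s x = x - s := by revert s x; decide

lemma outA_eq (s x : Fin 3) : outA s x = -s - x := by revert s x; decide

lemma outA_symm_eq (s y : Fin 3) : (outA s).symm y = -s - y := by revert s y; decide

lemma fin3_three : (3 : Fin 3) = 0 := rfl

lemma invNxtA_eq (s y : Fin 3) : invNxt nxtA outA s y = s - y := by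
  rw [invNxt, outA_symm_eq, nxtA_eq]
  linear_combination (-s) * fin3_three

lemma run_succ' (s : Fin 3) (w : ℕ → X3) (n : ℕ) :
    run nxtA s w (n + 1) = w n - run nxtA s w n := by
  show nxtA (run nxtA s w n) (w n) = _
  rw [nxtA_eq]

lemma runInv_succ' (s : Fin 3) (y : ℕ → X3) (n : ℕ) :
    run (invNxt nxtA outA) s y (n + 1) = run (invNxt nxtA outA) s y n - y n := by
  show invNxt nxtA outA (run (invNxt nxtA outA) s y n) (y n) = _
  rw [invNxtA_eq]

lemma a_apply (w : ℕ → X3) (n : ℕ) :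
    a w n = -(run nxtA 0 w n) - w n := by
  show fwd nxtA outA 0 w n = _
  rw [fwd, outA_eq]

/-- `α` acts coordinatewise as subtraction of `1`. -/
lemma alpha_coordwise (w : ℕ → X3) (n : ℕ) : α w n = w n - 1 := by
  have key : ∀ m, run (invNxt nxtA outA) 1 (fwd nxtA outA 0 w) m
      = run nxtA 0 w m + 1 := by
    intro m
    induction m with
    | zero => rfl
    | succ m ih =>
        rw [runInv_succ', run_succ', ih]
        show _ - fwd nxtA outA 0 w m = _
        rw [fwd, outA_eq]
        linear_combination (run nxtA 0 w m) * fin3_three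
  show bwd nxtA outA 1 (fwd nxtA outA 0 w) n = _
  rw [bwd, outA_symm_eq, key]
  show -(run nxtA 0 w n + 1) - fwd nxtA outA 0 w n = _
  rw [fwd, outA_eq]
  ring

/-- The "run difference" sequence associated with a translation vector. -/
def Dv (v : ℕ → X3) : ℕ → X3
  | 0 => 0
  | n + 1 => v n - Dv v n

/-- The effect of conjugation by `a` on translation vectors. -/
def Phi (v : ℕ → X3) : ℕ → X3 := fun n => -(Dv v n) - v n

lemma run_add (u v : ℕ → X3) (n : ℕ) :
    run nxtA 0 (fun m => u m + v m) n = run nxtA 0 u n + Dv v n := by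
  induction n with
  | zero => rfl
  | succ n ih =>
      rw [run_succ', run_succ', ih]
      show u n + v n - _ = _ + Dv v (n + 1)
      rw [Dv]
      ring

/-- Conjugating a coordinatewise translation by `a` yields the coordinatewise
translation by `Phi v`. -/
lemma conj_coordwise (g : Equiv.Perm (ℕ → X3)) (v : ℕ → X3)
    (h : ∀ w n, g w n = w n + v n) (w : ℕ → X3) (n : ℕ) :
    (a * g * a⁻¹) w n = w n + Phi v n := by
  have hgu : g (a⁻¹ w) = fun m => (a⁻¹ w) m + v m := funext (h (a⁻¹ w))
  have hmul : (a * g * a⁻¹) w = a (g (a⁻¹ w)) := rfl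
  rw [hmul, hgu, a_apply, run_add]
  have hw : a (a⁻¹ w) = w := Equiv.apply_symm_apply a w
  calc -(run nxtA 0 (a⁻¹ w) n + Dv v n) - ((a⁻¹ w) n + v n)
      = (-(run nxtA 0 (a⁻¹ w) n) - (a⁻¹ w) n) + (-(Dv v n) - v n) := by ring
    _ = w n + Phi v n := by rw [← a_apply, hw, Phi]

/-- The set of translation vectors realized by elements of `G_A`. -/
def V : Set (ℕ → X3) := {v | ∃ g ∈ GA, ∀ w n, g w n = w n + v n}

lemma a_mem_GA : a ∈ GA := Subgroup.subset_closure (by simp)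
lemma b_mem_GA : b ∈ GA := Subgroup.subset_closure (by simp)

lemma V_zero : (fun _ => (0 : X3)) ∈ V :=
  ⟨1, one_mem _, fun w n => by simp⟩

lemma V_add {v v' : ℕ → X3} (hv : v ∈ V) (hv' : v' ∈ V) :
    (fun n => v n + v' n) ∈ V := by
  obtain ⟨g, hg, hgv⟩ := hv
  obtain ⟨g', hg', hgv'⟩ := hv'
  exact ⟨g * g', mul_mem hg hg', fun w n => by
    show g (g' w) n = _
    rw [hgv, hgv']
    ring⟩

lemma V_delta : (fun _ => (-1 : X3)) ∈ V :=
  ⟨α, mul_mem (inv_mem b_mem_GA) a_mem_GA,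
    fun w n => by rw [alpha_coordwise]; ring⟩

lemma V_Phi {v : ℕ → X3} (hv : v ∈ V) : Phi v ∈ V := by
  obtain ⟨g, hg, hgv⟩ := hv
  exact ⟨a * g * a⁻¹, mul_mem (mul_mem a_mem_GA hg) (inv_mem a_mem_GA),
    conj_coordwise g v hgv⟩

/-- The map `Psi = Phi + id`. -/
def Psi (v : ℕ → X3) : ℕ → X3 := fun n => Phi v n + v n

lemma V_Psi {v : ℕ → X3} (hv : v ∈ V) : Psi v ∈ V := V_add (V_Phi hv) hv

lemma Psi_eq (v : ℕ → X3) (n : ℕ) : Psi v n = -(Dv v n) := by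
  show Phi v n + v n = _
  rw [Phi]; ring

lemma V_nsmul {v : ℕ → X3} (hv : v ∈ V) (c : ℕ) :
    (fun n => (c : X3) * v n) ∈ V := by
  induction c with
  | zero => simpa using V_zero
  | succ c ih =>
      have := V_add ih hv
      convert this using 2 with n
      push_cast
      ring

/-- For every `k` there is a realized translation vector vanishing before `k`
and non-zero at `k`. -/
lemma exists_concentrated : ∀ k : ℕ, ∃ v ∈ V, (∀ i, i < k → v i = 0) ∧ v k ≠ 0 := by
  intro k
  induction k with
  | zero => exact ⟨fun _ => -1, V_delta, fun i hi => absurd hi (Nat.not_lt_zero i), by decide⟩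
  | succ k ih =>
      obtain ⟨v, hv, hv0, hvk⟩ := ih
      refine ⟨Psi v, V_Psi hv, ?_, ?_⟩
      · have hD : ∀ i, i ≤ k → Dv v i = 0 := by
          intro i hi
          induction i with
          | zero => rfl
          | succ i ih' =>
              rw [Dv, hv0 i (Nat.lt_of_succ_le hi), ih' (Nat.le_of_succ_le hi)]
              ring
        intro i hi
        rw [Psi_eq, hD i (Nat.lt_succ_iff.mp hi)]
        ring
      · rw [Psi_eq, Dv]
        have hD : Dv v k = 0 := by
          have hD' : ∀ i, i ≤ k → Dv v i = 0 := by
            intro i hi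
            induction i with
            | zero => rfl
            | succ i ih' =>
                rw [Dv, hv0 i (Nat.lt_of_succ_le hi), ih' (Nat.le_of_succ_le hi)]
                ring
          exact hD' k le_rfl
        rw [hD]
        intro hcon
        apply hvk
        have : -(v k - 0) = 0 := hcon
        have h2 : v k - 0 = 0 := by
          have := congrArg Neg.neg this
          simpa using this
        simpa using h2

/-- `V` projects onto every finite level. -/
lemma exists_match : ∀ (n : ℕ) (τ : ℕ → X3), ∃ v ∈ V, ∀ i, i < n → v i = τ i := by
  intro n
  induction n with
  | zero => exact fun τ => ⟨fun _ => 0, V_zero, fun i hi => absurd hi (Nat.not_lt_zero i)⟩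
  | succ n ih =>
      intro τ
      obtain ⟨v, hv, hvmatch⟩ := ih τ
      obtain ⟨z, hz, hz0, hzn⟩ := exists_concentrated n
      have key : ∀ e d : Fin 3, e ≠ 0 → ∃ c : Fin 3, ((c.val : X3)) * e = d := by decide
      obtain ⟨c, hc⟩ := key (z n) (τ n - v n) hzn
      refine ⟨fun i => v i + (c.val : X3) * z i,
        V_add hv (V_nsmul hz c.val), ?_⟩
      intro i hi
      rcases Nat.lt_succ_iff_lt_or_eq.mp hi with hi' | hi'
      · show v i + (c.val : X3) * z i = τ i
        rw [hvmatch i hi', hz0 i hi']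
        ring
      · subst hi'
        show v i + (c.val : X3) * z i = τ i
        rw [hc]
        ring

/-- `G_A` acts transitively on `Xⁿ` for every `n`: for all words
`u, v` of length `n` there is `g ∈ G_A` mapping every sequence with prefix `u`
to a sequence with prefix `v`. -/
theorem GA_transitive_on_levels :
    ∀ (n : ℕ) (u v : Fin n → X3), ∃ g ∈ GA,
      ∀ w : ℕ → X3, (∀ i : Fin n, w i.val = u i) → ∀ i : Fin n, g w i.val = v i := by
  intro n u v
  set τ : ℕ → X3 := fun i => if h : i < n then v ⟨i, h⟩ - u ⟨i, h⟩ else 0 with hτ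
  obtain ⟨ν, hν, hνmatch⟩ := exists_match n τ
  obtain ⟨g, hg, hgν⟩ := hν
  refine ⟨g, hg, ?_⟩
  intro w hw i
  rw [hgν, hw i, hνmatch i.val i.isLt, hτ]
  simp only [dif_pos i.isLt, Fin.eta]
  ring


end Lamplighter
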